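/- Second-moment bound for the shifted doubly robust error estimator: under the stated setup, with E_h := ((1[h(X)≠Y] − 1[h(X)≠Y'])·Q/P(X) + 1[h(X)≠Y'])·1[X∈D], one has E[E_h²] ≤ E[1[X∈D]·(1[Y≠Y']/P(X) + 1[h(X)≠Y])]; i.e. the second moment is controlled by the inverse-probability-weighted weak-label error rate on the disagreement region plus the restricted true error of h. -/
import Mathlib


open MeasureTheory

open Classical in
/-- Real-valued indicator of a proposition. -/
noncomputable def ind (p : Prop) : ℝ := if p then 1 else 0

lemma ind_mem (p : Prop) : ind p = 0 ∨ ind p = 1 := by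
  unfold ind; split <;> simp

lemma ind_nonneg (p : Prop) : 0 ≤ ind p := by
  rcases ind_mem p with h | h <;> rw [h] <;> norm_num

lemma ind_le_one (p : Prop) : ind p ≤ 1 := by
  rcases ind_mem p with h | h <;> rw [h] <;> norm_num

lemma integrable_of_bdd {Ω : Type*} [MeasurableSpace Ω] {μ : Measure Ω}
    [IsFiniteMeasure μ] {f : Ω → ℝ} (hf : Measurable f) (C : ℝ)
    (hb : ∀ ω, |f ω| ≤ C) : Integrable f μ :=
  (integrable_const C).mono' hf.aestronglyMeasurable
    (Filter.Eventually.of_forall fun ω => by simpa using hb ω)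

lemma aux_eq (p m a b d q : ℝ) (hp : p ≠ 0) (hd : d = 0 ∨ d = 1)
    (hq : q = 0 ∨ q = 1) (hb : b = 0 ∨ b = 1) (hm : m = (a - b) ^ 2) :
    (((a - b) * q / p + b) * d) ^ 2
      = (d * m / p ^ 2 + 2 * (d * (a * b - b) / p)) * q + d * b := by
  subst hm
  rcases hd with rfl | rfl <;> rcases hq with rfl | rfl <;> rcases hb with rfl | rfl <;>
    field_simp <;> try ring

lemma aux_ineq (p m a b d : ℝ) (hp : p ≠ 0) (hd : d = 0 ∨ d = 1)
    (ha : a = 0 ∨ a = 1) (hb : b = 0 ∨ b = 1) :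
    (d * m / p ^ 2 + 2 * (d * (a * b - b) / p)) * p + d * b ≤ d * (m / p + a) := by
  calc (d * m / p ^ 2 + 2 * (d * (a * b - b) / p)) * p + d * b
      = d * (m / p) + (2 * (d * (a * b - b)) + d * b) := by field_simp; ring
    _ ≤ d * (m / p) + d * a := by
        have : 2 * (d * (a * b - b)) + d * b ≤ d * a := by
          rcases hd with rfl | rfl <;> rcases ha with rfl | rfl <;>
            rcases hb with rfl | rfl <;> norm_num
        linarith
    _ = d * (m / p + a) := by ring

/-- Second-moment bound for the shifted doubly robust error estimator. -/
theorem shifted_dr_error_second_moment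
    {Ω 𝒳 : Type*} [MeasurableSpace Ω] [MeasurableSpace 𝒳]
    (μ : Measure Ω) [IsProbabilityMeasure μ]
    (X : Ω → 𝒳) (hX : Measurable X)
    (Y Y' : Ω → Bool) (hY : Measurable Y) (hY' : Measurable Y')
    (D : Set 𝒳) (hD : MeasurableSet D)
    (P : 𝒳 → ℝ) (hP : Measurable P)
    (pmin : ℝ) (hpmin : 0 < pmin)
    (hPbound : ∀ x, pmin ≤ P x ∧ P x ≤ 1)
    (Q : Ω → ℝ) (hQ : Measurable Q) (hQ01 : ∀ ω, Q ω = 0 ∨ Q ω = 1)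
    (hQcond : ∀ g : 𝒳 × Bool × Bool → ℝ, Measurable g → (∃ C, ∀ z, |g z| ≤ C) →
      ∫ ω, g (X ω, Y ω, Y' ω) * Q ω ∂μ = ∫ ω, g (X ω, Y ω, Y' ω) * P (X ω) ∂μ)
    (h : 𝒳 → Bool) (hh : Measurable h)
    (E : Ω → ℝ)
    (hE : ∀ ω, E ω = ((ind (h (X ω) ≠ Y ω) - ind (h (X ω) ≠ Y' ω)) * Q ω / P (X ω)
        + ind (h (X ω) ≠ Y' ω)) * ind (X ω ∈ D)) :
    ∫ ω, (E ω) ^ 2 ∂μ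
      ≤ ∫ ω, ind (X ω ∈ D) *
          (ind (Y ω ≠ Y' ω) / P (X ω) + ind (h (X ω) ≠ Y ω)) ∂μ := by
  set G : 𝒳 × Bool × Bool → ℝ := fun z =>
    ind (z.1 ∈ D) * ind (z.2.1 ≠ z.2.2) / (P z.1) ^ 2
      + 2 * (ind (z.1 ∈ D) * (ind (h z.1 ≠ z.2.1) * ind (h z.1 ≠ z.2.2)
          - ind (h z.1 ≠ z.2.2)) / P z.1) with hG
  have hPpos : ∀ x, 0 < P x := fun x => lt_of_lt_of_le hpmin (hPbound x).1
  have hPne : ∀ x, P x ≠ 0 := fun x => ne_of_gt (hPpos x)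
  -- measurability helpers
  have mD : Measurable fun z : 𝒳 × Bool × Bool => ind (z.1 ∈ D) := by
    have : (fun z : 𝒳 × Bool × Bool => ind (z.1 ∈ D))
        = fun z => Set.indicator D (fun _ => (1:ℝ)) z.1 := by
      funext z; simp [ind, Set.indicator]
    rw [this]
    exact (measurable_one.indicator hD).comp measurable_fst
  have m1 : Measurable fun z : 𝒳 × Bool × Bool => ind (z.2.1 ≠ z.2.2) :=
    (measurable_of_countable (fun p : Bool × Bool => ind (p.1 ≠ p.2))).comp
      measurable_snd
  have m2 : Measurable fun z : 𝒳 × Bool × Bool => ind (h z.1 ≠ z.2.1) :=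
    (measurable_of_countable (fun p : Bool × Bool => ind (p.1 ≠ p.2))).comp
      ((hh.comp measurable_fst).prodMk (measurable_fst.comp measurable_snd))
  have m3 : Measurable fun z : 𝒳 × Bool × Bool => ind (h z.1 ≠ z.2.2) :=
    (measurable_of_countable (fun p : Bool × Bool => ind (p.1 ≠ p.2))).comp
      ((hh.comp measurable_fst).prodMk (measurable_snd.comp measurable_snd))
  have mP : Measurable fun z : 𝒳 × Bool × Bool => P z.1 := hP.comp measurable_fst
  have mG : Measurable G := by
    apply Measurable.add
    · exact (mD.mul m1).div (mP.pow_const 2)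
    · exact measurable_const.mul ((mD.mul ((m2.mul m3).sub m3)).div mP)
  -- bound on G
  have hGbdd : ∀ z, |G z| ≤ 1 / pmin ^ 2 + 2 / pmin := by
    intro z
    have hp : pmin ≤ P z.1 := (hPbound z.1).1
    have hp0 : 0 < P z.1 := hPpos z.1
    have hu : |ind (z.1 ∈ D) * ind (z.2.1 ≠ z.2.2)| ≤ 1 := by
      rcases ind_mem (z.1 ∈ D) with hd | hd <;>
        rcases ind_mem (z.2.1 ≠ z.2.2) with hm | hm <;>
        rw [hd, hm] <;> norm_num
    have hv : |ind (z.1 ∈ D) * (ind (h z.1 ≠ z.2.1) * ind (h z.1 ≠ z.2.2)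
        - ind (h z.1 ≠ z.2.2))| ≤ 1 := by
      rcases ind_mem (z.1 ∈ D) with hd | hd <;>
        rcases ind_mem (h z.1 ≠ z.2.1) with ha | ha <;>
        rcases ind_mem (h z.1 ≠ z.2.2) with hb | hb <;>
        rw [hd, ha, hb] <;> norm_num
    have t1 : |ind (z.1 ∈ D) * ind (z.2.1 ≠ z.2.2) / (P z.1) ^ 2| ≤ 1 / pmin ^ 2 := by
      rw [abs_div, abs_of_pos (by positivity : (0:ℝ) < (P z.1) ^ 2)]
      exact div_le_div₀ zero_le_one hu (by positivity) (by nlinarith)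
    have t2 : |2 * (ind (z.1 ∈ D) * (ind (h z.1 ≠ z.2.1) * ind (h z.1 ≠ z.2.2)
        - ind (h z.1 ≠ z.2.2)) / P z.1)| ≤ 2 / pmin := by
      rw [abs_mul, abs_div, abs_of_pos hp0, (by norm_num : |(2:ℝ)| = 2)]
      have : |ind (z.1 ∈ D) * (ind (h z.1 ≠ z.2.1) * ind (h z.1 ≠ z.2.2)
          - ind (h z.1 ≠ z.2.2))| / P z.1 ≤ 1 / pmin := div_le_div₀ zero_le_one hv hpmin hp
      calc 2 * (|ind (z.1 ∈ D) * (ind (h z.1 ≠ z.2.1) * ind (h z.1 ≠ z.2.2)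
            - ind (h z.1 ≠ z.2.2))| / P z.1) ≤ 2 * (1 / pmin) := by linarith
        _ = 2 / pmin := by ring
    calc |G z| ≤ |ind (z.1 ∈ D) * ind (z.2.1 ≠ z.2.2) / (P z.1) ^ 2|
          + |2 * (ind (z.1 ∈ D) * (ind (h z.1 ≠ z.2.1) * ind (h z.1 ≠ z.2.2)
            - ind (h z.1 ≠ z.2.2)) / P z.1)| := abs_add_le _ _
      _ ≤ 1 / pmin ^ 2 + 2 / pmin := add_le_add t1 t2
  set H : Ω → ℝ := fun ω => ind (X ω ∈ D) * ind (h (X ω) ≠ Y' ω) with hH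
  have mXYY : Measurable fun ω => (X ω, Y ω, Y' ω) := hX.prodMk (hY.prodMk hY')
  have mH : Measurable H := (mD.mul m3).comp mXYY
  have hHbdd : ∀ ω, |H ω| ≤ 1 := by
    intro ω
    simp only [hH]
    rcases ind_mem (X ω ∈ D) with hd | hd <;>
      rcases ind_mem (h (X ω) ≠ Y' ω) with hb | hb <;>
      rw [hd, hb] <;> norm_num
  -- key pointwise identity
  have key : ∀ ω, E ω ^ 2 = G (X ω, Y ω, Y' ω) * Q ω + H ω := by
    intro ω
    have hm : ind (Y ω ≠ Y' ω)
        = (ind (h (X ω) ≠ Y ω) - ind (h (X ω) ≠ Y' ω)) ^ 2 := by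
      rcases Bool.eq_false_or_eq_true (Y ω) with h1 | h1 <;>
        rcases Bool.eq_false_or_eq_true (Y' ω) with h2 | h2 <;>
        rcases Bool.eq_false_or_eq_true (h (X ω)) with h3 | h3 <;>
        simp [h1, h2, h3, ind] <;> norm_num
    rw [hE]
    exact aux_eq (P (X ω)) (ind (Y ω ≠ Y' ω)) (ind (h (X ω) ≠ Y ω))
      (ind (h (X ω) ≠ Y' ω)) (ind (X ω ∈ D)) (Q ω) (hPne (X ω))
      (ind_mem _) (hQ01 ω) (ind_mem _) hm
  -- key pointwise inequality
  have keyineq : ∀ ω, G (X ω, Y ω, Y' ω) * P (X ω) + H ω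
      ≤ ind (X ω ∈ D) * (ind (Y ω ≠ Y' ω) / P (X ω) + ind (h (X ω) ≠ Y ω)) := by
    intro ω
    exact aux_ineq (P (X ω)) (ind (Y ω ≠ Y' ω)) (ind (h (X ω) ≠ Y ω))
      (ind (h (X ω) ≠ Y' ω)) (ind (X ω ∈ D)) (hPne (X ω))
      (ind_mem _) (ind_mem _) (ind_mem _)
  -- integrability
  have hQ1 : ∀ ω, |Q ω| ≤ 1 := by
    intro ω; rcases hQ01 ω with hq | hq <;> rw [hq] <;> norm_num
  have hP1 : ∀ ω, |P (X ω)| ≤ 1 := by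
    intro ω; rw [abs_of_pos (hPpos (X ω))]; exact (hPbound (X ω)).2
  have intG_Q : Integrable (fun ω => G (X ω, Y ω, Y' ω) * Q ω) μ := by
    refine integrable_of_bdd ((mG.comp mXYY).mul hQ) ((1 / pmin ^ 2 + 2 / pmin) * 1)
      fun ω => ?_
    rw [abs_mul]
    exact mul_le_mul (hGbdd _) (hQ1 ω) (abs_nonneg _) (by positivity)
  have intG_P : Integrable (fun ω => G (X ω, Y ω, Y' ω) * P (X ω)) μ := by
    refine integrable_of_bdd ((mG.comp mXYY).mul (hP.comp hX)) ((1 / pmin ^ 2 + 2 / pmin) * 1)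
      fun ω => ?_
    rw [abs_mul]
    exact mul_le_mul (hGbdd _) (hP1 ω) (abs_nonneg _) (by positivity)
  have intH : Integrable H μ := integrable_of_bdd mH 1 hHbdd
  have mR : Measurable fun ω => ind (X ω ∈ D) *
      (ind (Y ω ≠ Y' ω) / P (X ω) + ind (h (X ω) ≠ Y ω)) :=
    (mD.mul ((m1.div mP).add m2)).comp mXYY
  have intR : Integrable (fun ω => ind (X ω ∈ D) *
      (ind (Y ω ≠ Y' ω) / P (X ω) + ind (h (X ω) ≠ Y ω))) μ := by
    refine integrable_of_bdd mR (1 * (1 / pmin + 1)) fun ω => ?_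
    have hp : pmin ≤ P (X ω) := (hPbound (X ω)).1
    have hp0 : 0 < P (X ω) := hPpos (X ω)
    have h1p : 1 / P (X ω) ≤ 1 / pmin := one_div_le_one_div_of_le hpmin hp
    rw [abs_mul]
    refine mul_le_mul ?_ ?_ (abs_nonneg _) zero_le_one
    · rcases ind_mem (X ω ∈ D) with h5 | h5 <;> rw [h5] <;> norm_num
    · rw [abs_of_nonneg (add_nonneg (div_nonneg (ind_nonneg _) hp0.le) (ind_nonneg _))]
      have := ind_le_one (Y ω ≠ Y' ω)
      have := ind_nonneg (Y ω ≠ Y' ω)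
      have := ind_le_one (h (X ω) ≠ Y ω)
      have h2p : ind (Y ω ≠ Y' ω) / P (X ω) ≤ 1 / pmin :=
        div_le_div₀ zero_le_one (ind_le_one _) hpmin hp
      linarith
  calc ∫ ω, E ω ^ 2 ∂μ
      = ∫ ω, (G (X ω, Y ω, Y' ω) * Q ω + H ω) ∂μ :=
        integral_congr_ae (Filter.Eventually.of_forall key)
    _ = (∫ ω, G (X ω, Y ω, Y' ω) * Q ω ∂μ) + ∫ ω, H ω ∂μ := integral_add intG_Q intH
    _ = (∫ ω, G (X ω, Y ω, Y' ω) * P (X ω) ∂μ) + ∫ ω, H ω ∂μ := by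
        rw [hQcond G mG ⟨_, hGbdd⟩]
    _ = ∫ ω, (G (X ω, Y ω, Y' ω) * P (X ω) + H ω) ∂μ := (integral_add intG_P intH).symm
    _ ≤ ∫ ω, ind (X ω ∈ D) * (ind (Y ω ≠ Y' ω) / P (X ω) + ind (h (X ω) ≠ Y ω)) ∂μ :=
        integral_mono (intG_P.add intH) intR keyineq
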